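/- The mirror virtual relation T_i(β)·T_{i+1}(β)·B_i(α) = B_{i+1}(α)·T_i(β)·T_{i+1}(β) holds for all nonzero α, β ∈ ℂ and 1 ≤ i ≤ n-2. -/

import Mathlib

set_option maxHeartbeats 1000000

open Matrix

/-- Burau matrix `B_i(α)`. -/
noncomputable def burauB (n : ℕ) (α : ℂ) (i : ℕ) : Matrix (Fin n) (Fin n) ℂ :=
  Matrix.of fun k l =>
    if k.val = i ∧ l.val = i then 1 - α
    else if k.val = i ∧ l.val = i + 1 then α
    else if k.val = i + 1 ∧ l.val = i then 1
    else if k.val = i + 1 ∧ l.val = i + 1 then 0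
    else if k = l then 1 else 0

/-- Permutation-type matrix `T_i(β)`. -/
noncomputable def permT (n : ℕ) (β : ℂ) (i : ℕ) : Matrix (Fin n) (Fin n) ℂ :=
  Matrix.of fun k l =>
    if k.val = i ∧ l.val = i then 0
    else if k.val = i ∧ l.val = i + 1 then β⁻¹
    else if k.val = i + 1 ∧ l.val = i then β
    else if k.val = i + 1 ∧ l.val = i + 1 then 0
    else if k = l then 1 else 0

lemma burauB_eq (n : ℕ) (α : ℂ) (i : ℕ) (h : i + 1 < n) :
    burauB n α i = 1 + (-α) • single ⟨i, by omega⟩ ⟨i, by omega⟩ (1:ℂ)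
      + α • single ⟨i, by omega⟩ ⟨i+1, h⟩ (1:ℂ)
      + (1:ℂ) • single ⟨i+1, h⟩ ⟨i, by omega⟩ (1:ℂ)
      + (-1:ℂ) • single ⟨i+1, h⟩ ⟨i+1, h⟩ (1:ℂ) := by
  ext k l
  simp only [burauB, Matrix.of_apply, Matrix.add_apply, Matrix.one_apply, Matrix.smul_apply,
    Matrix.single, Matrix.of_apply, smul_eq_mul, mul_ite, mul_one, mul_zero, Fin.ext_iff]
  split_ifs <;> first | omega | ring

lemma permT_eq (n : ℕ) (β : ℂ) (i : ℕ) (h : i + 1 < n) :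
    permT n β i = 1 + (-1:ℂ) • single ⟨i, by omega⟩ ⟨i, by omega⟩ (1:ℂ)
      + β⁻¹ • single ⟨i, by omega⟩ ⟨i+1, h⟩ (1:ℂ)
      + β • single ⟨i+1, h⟩ ⟨i, by omega⟩ (1:ℂ)
      + (-1:ℂ) • single ⟨i+1, h⟩ ⟨i+1, h⟩ (1:ℂ) := by
  ext k l
  simp only [permT, Matrix.of_apply, Matrix.add_apply, Matrix.one_apply, Matrix.smul_apply,
    Matrix.single, Matrix.of_apply, smul_eq_mul, mul_ite, mul_one, mul_zero, Fin.ext_iff]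
  split_ifs <;> first | omega | ring

/-- The mirror virtual relation `τ_i τ_{i+1} σ_i = σ_{i+1} τ_i τ_{i+1}`. -/
theorem mirror_virtual_relation (n : ℕ) (α β : ℂ) (hα : α ≠ 0) (hβ : β ≠ 0)
    (i : ℕ) (h : i + 2 < n) :
    permT n β i * permT n β (i + 1) * burauB n α i =
      burauB n α (i + 1) * permT n β i * permT n β (i + 1) := by
  have h1 : i + 1 < n := by omega
  have h2 : i + 1 + 1 < n := by omega
  set a : Fin n := ⟨i, by omega⟩ with ha
  set b : Fin n := ⟨i+1, h1⟩ with hb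
  set c : Fin n := ⟨i+2, h⟩ with hc
  have hab : a ≠ b := by simp [ha, hb, Fin.ext_iff]
  have hba : b ≠ a := hab.symm
  have hac : a ≠ c := by simp [ha, hc, Fin.ext_iff]
  have hca : c ≠ a := hac.symm
  have hbc : b ≠ c := by simp [hb, hc, Fin.ext_iff]
  have hcb : c ≠ b := hbc.symm
  rw [burauB_eq n α i h1, burauB_eq n α (i+1) h2, permT_eq n β i h1, permT_eq n β (i+1) h2]
  show (1 + (-1:ℂ) • single a a 1 + β⁻¹ • single a b 1 + β • single b a 1 + (-1:ℂ) • single b b 1)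
      * (1 + (-1:ℂ) • single b b 1 + β⁻¹ • single b c 1 + β • single c b 1 + (-1:ℂ) • single c c 1)
      * (1 + (-α) • single a a 1 + α • single a b 1 + (1:ℂ) • single b a 1 + (-1:ℂ) • single b b 1)
    = (1 + (-α) • single b b 1 + α • single b c 1 + (1:ℂ) • single c b 1 + (-1:ℂ) • single c c 1)
      * (1 + (-1:ℂ) • single a a 1 + β⁻¹ • single a b 1 + β • single b a 1 + (-1:ℂ) • single b b 1)
      * (1 + (-1:ℂ) • single b b 1 + β⁻¹ • single b c 1 + β • single c b 1 + (-1:ℂ) • single c c 1)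
  simp only [add_mul, mul_add, one_mul, mul_one, smul_mul_assoc, mul_smul_comm, smul_smul,
    Matrix.single_mul_single_same,
    Matrix.single_mul_single_of_ne _ _ _ _ hab, Matrix.single_mul_single_of_ne _ _ _ _ hba,
    Matrix.single_mul_single_of_ne _ _ _ _ hac, Matrix.single_mul_single_of_ne _ _ _ _ hca,
    Matrix.single_mul_single_of_ne _ _ _ _ hbc, Matrix.single_mul_single_of_ne _ _ _ _ hcb,
    smul_zero, add_zero, zero_add]
  module
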